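/- With the bilinear form of Proposition 1.1 on the free superalgebra F and i a real index, the norm of the divided power is (a_i^{(n)}, a_i^{(n)}) = q_i^{binom(n,2)} (1 - (-1)^{p(i)} q_i^2)^{-n} ([n]!_i)^{-1} for all n ≥ 0. -/

import Mathlib

open scoped BigOperators
set_option maxHeartbeats 1000000
set_option synthInstance.maxHeartbeats 400000

noncomputable section

/-- The base field `ℚ(q)`. -/
abbrev K : Type := RatFunc ℚ

/-- The indeterminate `q`. -/
def qq : K := RatFunc.X

/-- Words in the generators `a_{il}`, `(i,l) ∈ I^∞ = I × ℤ_{>0}`. -/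
abbrev Word (I : Type) := FreeMonoid (I × ℕ+)

/-- The parity of a word: the sum of the parities `l·p(i)` of its letters. -/
def wP {I : Type} (p : I → ℕ) (w : Word I) : ℕ :=
  ((FreeMonoid.toList w).map fun a => (a.2 : ℕ) * p a.1).sum

/-- The pairing `(|w|, |w'|)` of the weights of two words, where the letter
`(i,l)` has weight `l·α_i` and `(α_i, α_j) = B i j`. -/
def wB {I : Type} (B : I → I → ℤ) (w w' : Word I) : ℤ :=
  ((FreeMonoid.toList w).map fun a =>
    (((FreeMonoid.toList w').map fun b => (a.2 : ℤ) * (b.2 : ℤ) * B a.1 b.1)).sum).sum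

/-- The weight of a word in the root lattice `Q = ⊕ ℤα_i`. -/
def wWt {I : Type} (w : Word I) : I →₀ ℤ :=
  ((FreeMonoid.toList w).map fun a => Finsupp.single a.1 (a.2 : ℤ)).sum

/-- The free associative `ℚ(q)`-superalgebra `F` on the generators `a_{il}`. -/
abbrev F (I : Type) := MonoidAlgebra K (Word I)

/-- The underlying vector space of `F ⊗ F`, with basis the pairs of words. -/
abbrev M (I : Type) := (Word I × Word I) →₀ K

/-- The basis element of `F` corresponding to a word. -/
def toF {I : Type} (w : Word I) : F I := MonoidAlgebra.single w 1

/-- The generator `a_{il}` of `F`. -/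
def gen {I : Type} (i : I) (l : ℕ+) : F I := toF (FreeMonoid.of (i, l))

/-- The twisted multiplication on `F ⊗ F`:
`(x₁⊗x₂)(x₃⊗x₄) = (-1)^{p(x₂)p(x₃)} q^{(|x₂|,|x₃|)} x₁x₃ ⊗ x₂x₄`. -/
def twmul {I : Type} (p : I → ℕ) (B : I → I → ℤ) (f g : M I) : M I :=
  f.sum fun a ca => g.sum fun b cb =>
    Finsupp.single (a.1 * b.1, a.2 * b.2)
      (ca * cb * (-1 : K) ^ (wP p a.2 * wP p b.1) * qq ^ (wB B a.2 b.1))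

/-- Word reversal. -/
def wrev {I : Type} (w : Word I) : Word I :=
  FreeMonoid.ofList (FreeMonoid.toList w).reverse

/-- The anti-automorphism `σ` of `F` fixing each generator `a_{il}`:
it reverses every word. -/
def sigmaF {I : Type} : F I → F I :=
  fun x => MonoidAlgebra.ofCoeff (Finsupp.mapDomain wrev x.coeff)

/-- `q_i = q^{d_i}`. -/
def qi {I : Type} (d : I → ℕ+) (i : I) : K := qq ^ (d i : ℕ)

/-- The super quantum integer `[m]` at parameter `Q` and parity `pi`. -/
def sInt (pi : ℕ) (Q : K) (m : ℕ) : K :=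
  (((-1) ^ pi * Q) ^ m - Q⁻¹ ^ m) / ((-1) ^ pi * Q - Q⁻¹)

/-- The super quantum factorial `[n]!` at parameter `Q` and parity `pi`. -/
def sFact (pi : ℕ) (Q : K) (n : ℕ) : K := ∏ s ∈ Finset.range n, sInt pi Q (s + 1)

/-- The divided power `a_i^{(n)} = a_i^n / [n]!_i` for a real index `i`. -/
def dp {I : Type} (p : I → ℕ) (d : I → ℕ+) (i : I) (n : ℕ) : F I :=
  (sFact (p i) (qi d i) n)⁻¹ • (gen i 1) ^ n

section helpers
variable {I : Type}

lemma toF_one : toF (1 : Word I) = 1 := rfl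

lemma toF_mul (w w' : Word I) : toF w * toF w' = toF (w * w') := by
  simp [toF, MonoidAlgebra.single_mul_single]

lemma gen_pow (i : I) (n : ℕ) : (gen i 1) ^ n = toF (FreeMonoid.of (i, 1) ^ n) := by
  induction n with
  | zero => simp [toF_one]
  | succ n ih => rw [pow_succ, pow_succ, ih, gen, toF_mul]

lemma toList_of_pow (x : I × ℕ+) (t : ℕ) :
    FreeMonoid.toList (FreeMonoid.of x ^ t) = List.replicate t x := by
  induction t with
  | zero => rfl
  | succ t ih => rw [pow_succ, FreeMonoid.toList_mul, ih, FreeMonoid.toList_of,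
      List.replicate_succ']

lemma wP_one (p : I → ℕ) : wP p (1 : Word I) = 0 := rfl

lemma wP_of (p : I → ℕ) (i : I) : wP p (FreeMonoid.of (i, (1:ℕ+))) = p i := by
  simp [wP, FreeMonoid.toList_of]

lemma wP_pow (p : I → ℕ) (i : I) (t : ℕ) :
    wP p (FreeMonoid.of (i, (1:ℕ+)) ^ t) = t * p i := by
  simp [wP, toList_of_pow, List.map_replicate, List.sum_replicate, smul_eq_mul]

lemma wB_one_left (B : I → I → ℤ) (w : Word I) : wB B (1 : Word I) w = 0 := rfl

lemma wB_of_pow (B : I → I → ℤ) (i : I) (t : ℕ) :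
    wB B (FreeMonoid.of (i, (1:ℕ+))) (FreeMonoid.of (i, (1:ℕ+)) ^ t) = t * B i i := by
  simp [wB, toList_of_pow, FreeMonoid.toList_of, List.map_replicate, List.sum_replicate,
    smul_eq_mul]

lemma twmul_single_single (p : I → ℕ) (B : I → I → ℤ) (a1 a2 b1 b2 : Word I) (ca cb : K) :
    twmul p B (Finsupp.single (a1, a2) ca) (Finsupp.single (b1, b2) cb) =
    Finsupp.single (a1 * b1, a2 * b2)
      (ca * cb * (-1 : K) ^ (wP p a2 * wP p b1) * qq ^ (wB B a2 b1)) := by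
  unfold twmul
  rw [Finsupp.sum_single_index, Finsupp.sum_single_index]
  · simp
  · rw [Finsupp.sum_single_index] <;> simp

lemma twmul_add_right (p : I → ℕ) (B : I → I → ℤ) (f g1 g2 : M I) :
    twmul p B f (g1 + g2) = twmul p B f g1 + twmul p B f g2 := by
  unfold twmul
  rw [← Finsupp.sum_add]
  apply Finsupp.sum_congr
  intro a _
  apply Finsupp.sum_add_index' <;> intros <;> simp [mul_add, add_mul, Finsupp.single_add]

lemma twmul_add_left (p : I → ℕ) (B : I → I → ℤ) (f1 f2 g : M I) :
    twmul p B (f1 + f2) g = twmul p B f1 g + twmul p B f2 g := by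
  unfold twmul
  apply Finsupp.sum_add_index' <;> intros <;>
    simp [mul_add, add_mul, Finsupp.single_add, ← Finsupp.sum_add]

lemma twmul_sum_right {α : Type*} (p : I → ℕ) (B : I → I → ℤ) (f : M I)
    (s : Finset α) (g : α → M I) :
    twmul p B f (∑ t ∈ s, g t) = ∑ t ∈ s, twmul p B f (g t) :=
  map_sum (AddMonoidHom.mk' (twmul p B f) (twmul_add_right p B f)) g s

lemma sum_sum_single {α β γ : Type*} [AddCommMonoid γ] (s : Finset α) (pt : α → β)
    (c : α → K) (h : β → K → γ) (h0 : ∀ b, h b 0 = 0)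
    (hadd : ∀ b x y, h b (x + y) = h b x + h b y) :
    (∑ t ∈ s, Finsupp.single (pt t) (c t) : β →₀ K).sum h = ∑ t ∈ s, h (pt t) (c t) := by
  classical
  induction s using Finset.cons_induction with
  | empty => simp
  | cons a s ha ih =>
    rw [Finset.sum_cons, Finset.sum_cons, Finsupp.sum_add_index' h0 hadd,
      Finsupp.sum_single_index (h0 _), ih]


def cf (r : K) : ℕ → ℕ → K
  | 0, 0 => 1
  | 0, _ + 1 => 0
  | n + 1, 0 => cf r n 0
  | n + 1, t + 1 => cf r n t + r ^ (t + 1) * cf r n (t + 1)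

lemma cf_zero_right (r : K) (n : ℕ) : cf r n 0 = 1 := by
  induction n with
  | zero => rfl
  | succ n ih => rw [cf, ih]

lemma cf_big (r : K) : ∀ n t, n < t → cf r n t = 0 := by
  intro n
  induction n with
  | zero => intro t ht; match t, ht with | t + 1, _ => rfl
  | succ n ih =>
    intro t ht
    match t, ht with
    | t + 1, ht =>
      rw [cf, ih t (by omega), ih (t+1) (by omega)]
      ring

lemma cf_one (r : K) (n : ℕ) : cf r n 1 = ∑ s ∈ Finset.range n, r ^ s := by
  induction n with
  | zero => simp [cf]
  | succ n ih =>
    rw [show (1:ℕ) = 0 + 1 from rfl, cf, cf_zero_right, ih, geom_sum_succ, pow_one]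
    ring

lemma qq_ne_zero : qq ≠ 0 := RatFunc.X_ne_zero

lemma qq_pow_ne_one (k : ℕ) (hk : k ≠ 0) : qq ^ k ≠ 1 := by
  intro h
  have : (Polynomial.X : Polynomial ℚ) ^ k = 1 := by
    apply RatFunc.algebraMap_injective ℚ
    simpa [qq, RatFunc.algebraMap_X] using h
  have h2 := congrArg Polynomial.natDegree this
  simp [Polynomial.natDegree_X_pow] at h2
  exact hk h2

lemma qq_pow_ne_neg_one (k : ℕ) : qq ^ k ≠ -1 := by
  intro h
  have : (Polynomial.X : Polynomial ℚ) ^ k = -1 := by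
    apply RatFunc.algebraMap_injective ℚ
    simpa [qq, RatFunc.algebraMap_X] using h
  have h2 := congrArg (Polynomial.eval 1) this
  norm_num at h2

lemma neg_one_pow_sq (k : ℕ) : ((-1 : K)) ^ (k * k) = (-1 : K) ^ k := by
  rcases Nat.even_or_odd k with h | h
  · rw [h.neg_one_pow, (h.mul_right k).neg_one_pow]
  · rw [h.neg_one_pow, (h.mul h).neg_one_pow]

lemma rho_pow {I : Type} (p : I → ℕ) (B : I → I → ℤ)
    (rho : F I →ₗ[K] M I)
    (hrho1 : rho 1 = Finsupp.single (1, 1) 1)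
    (hrhomul : ∀ x y : F I, rho (x * y) = twmul p B (rho x) (rho y))
    (hrhogen : ∀ (i : I) (l : ℕ+),
      rho (gen i l) = Finsupp.single (FreeMonoid.of (i, l), 1) 1
        + Finsupp.single (1, FreeMonoid.of (i, l)) 1)
    (i : I) (n : ℕ) :
    rho ((gen i 1) ^ n) = ∑ t ∈ Finset.range (n + 1),
      Finsupp.single (FreeMonoid.of (i, (1:ℕ+)) ^ t, FreeMonoid.of (i, (1:ℕ+)) ^ (n - t))
        (cf ((-1 : K) ^ (p i) * qq ^ (B i i)) n t) := by
  set X : Word I := FreeMonoid.of (i, (1:ℕ+)) with hXdef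
  set r : K := (-1 : K) ^ (p i) * qq ^ (B i i) with hrdef
  induction n with
  | zero => rw [pow_zero, hrho1]; simp [cf]
  | succ n ih =>
    rw [pow_succ', hrhomul, hrhogen, ih, twmul_add_left, twmul_sum_right, twmul_sum_right]
    have hsign : ∀ t : ℕ, ((-1 : K)) ^ (wP p X * wP p (X ^ t)) = ((-1 : K) ^ (p i)) ^ t := by
      intro t
      rw [hXdef, wP_of, wP_pow, show p i * (t * p i) = (p i * p i) * t by ring, pow_mul,
        neg_one_pow_sq]
    have hqpow : ∀ t : ℕ, (qq : K) ^ (wB B X (X ^ t)) = (qq ^ (B i i)) ^ t := by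
      intro t
      rw [hXdef, wB_of_pow, mul_comm, zpow_mul, zpow_natCast]
    have h1 : ∑ t ∈ Finset.range (n + 1),
        twmul p B (Finsupp.single (X, 1) 1) (Finsupp.single (X ^ t, X ^ (n - t)) (cf r n t))
        = ∑ t ∈ Finset.range (n + 1),
          Finsupp.single (X ^ (t + 1), X ^ (n - t)) (cf r n t) := by
      apply Finset.sum_congr rfl
      intro t ht
      rw [twmul_single_single, ← pow_succ', one_mul]
      congr 1
      simp [wP_one, wB_one_left]
    have h2 : ∑ t ∈ Finset.range (n + 1),
        twmul p B (Finsupp.single ((1 : Word I), X) 1)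
          (Finsupp.single (X ^ t, X ^ (n - t)) (cf r n t))
        = ∑ t ∈ Finset.range (n + 1),
          Finsupp.single (X ^ t, X ^ (n + 1 - t)) (r ^ t * cf r n t) := by
      apply Finset.sum_congr rfl
      intro t ht
      have ht' : t ≤ n := Nat.lt_succ_iff.mp (Finset.mem_range.mp ht)
      rw [twmul_single_single, ← pow_succ', one_mul,
        show n - t + 1 = n + 1 - t by omega]
      rw [hsign, hqpow, hrdef, mul_pow]
      exact congrArg _ (by ring)
    rw [← hXdef, h1, h2]
    rw [Finset.sum_range_succ'
      (fun t => Finsupp.single ((X : Word I) ^ t, X ^ (n + 1 - t)) (cf r (n + 1) t)) (n + 1)]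
    have e1 : ∀ s ∈ Finset.range (n + 1),
        Finsupp.single ((X : Word I) ^ (s + 1), X ^ (n + 1 - (s + 1))) (cf r (n + 1) (s + 1))
        = Finsupp.single ((X : Word I) ^ (s + 1), X ^ (n - s)) (cf r n s)
          + Finsupp.single ((X : Word I) ^ (s + 1), X ^ (n - s)) (r ^ (s + 1) * cf r n (s + 1)) := by
      intro s hs
      rw [show n + 1 - (s + 1) = n - s by omega,
        show cf r (n + 1) (s + 1) = cf r n s + r ^ (s + 1) * cf r n (s + 1) from rfl,
        Finsupp.single_add]
    rw [Finset.sum_congr rfl e1, Finset.sum_add_distrib]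
    have e2 : (∑ s ∈ Finset.range (n + 1),
          Finsupp.single ((X : Word I) ^ (s + 1), X ^ (n - s)) (r ^ (s + 1) * cf r n (s + 1)))
        + Finsupp.single ((X : Word I) ^ 0, X ^ (n + 1 - 0)) (cf r (n + 1) 0)
        = ∑ t ∈ Finset.range (n + 1),
          Finsupp.single ((X : Word I) ^ t, X ^ (n + 1 - t)) (r ^ t * cf r n t) := by
      have h3 := Finset.sum_range_succ'
        (fun t => Finsupp.single ((X : Word I) ^ t, X ^ (n + 1 - t)) (r ^ t * cf r n t)) (n + 1)
      have h4 : ∑ t ∈ Finset.range (n + 1 + 1),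
          Finsupp.single ((X : Word I) ^ t, X ^ (n + 1 - t)) (r ^ t * cf r n t)
          = ∑ t ∈ Finset.range (n + 1),
            Finsupp.single ((X : Word I) ^ t, X ^ (n + 1 - t)) (r ^ t * cf r n t) := by
        rw [Finset.sum_range_succ, cf_big r n (n + 1) (Nat.lt_succ_self n), mul_zero,
          Finsupp.single_zero, add_zero]
      rw [← h4, h3]
      congr 1
      · apply Finset.sum_congr rfl
        intro s hs
        rw [show n + 1 - (s + 1) = n - s by omega]
      · simp [cf_zero_right]
    rw [add_assoc, e2]

/-- Norm of the divided power of a real generator: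
`(a_i^{(n)}, a_i^{(n)}) = q_i^{C(n,2)} (1 - (-1)^{p(i)} q_i²)^{-n} ([n]!_i)⁻¹`. -/
theorem norm_dividedPower {I : Type} [DecidableEq I]
    (p : I → ℕ) (d : I → ℕ+) (B : I → I → ℤ) (hB : ∀ i j, B i j = B j i)
    (rho : F I →ₗ[K] M I)
    (hrho1 : rho 1 = Finsupp.single (1, 1) 1)
    (hrhomul : ∀ x y : F I, rho (x * y) = twmul p B (rho x) (rho y))
    (hrhogen : ∀ (i : I) (l : ℕ+),
      rho (gen i l) = Finsupp.single (FreeMonoid.of (i, l), 1) 1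
        + Finsupp.single (1, FreeMonoid.of (i, l)) 1)
    (Bf : F I →ₗ[K] F I →ₗ[K] K)
    (h11 : Bf 1 1 = 1)
    (hgenB : ∀ (i : I) (l : ℕ+) (j : I) (k : ℕ+),
      Bf (gen i l) (gen j k) =
        if i = j ∧ l = k then
          (1 - (-1 : K) ^ ((l : ℕ) * p i) * qq ^ (2 * (l : ℕ) * (d i : ℕ)))⁻¹
        else 0)
    (hR : ∀ x y y' : F I,
      Bf x (y * y') = (rho x).sum fun ab c => c * Bf (toF ab.1) y * Bf (toF ab.2) y')
    (hL : ∀ x x' y : F I,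
      Bf (x * x') y = (rho y).sum fun ab c => c * Bf x (toF ab.1) * Bf x' (toF ab.2))
    (i : I) (hre : B i i = 2 * (d i : ℤ)) (n : ℕ) :
    Bf (dp p d i n) (dp p d i n) =
      (qi d i) ^ Nat.choose n 2 * ((1 - (-1 : K) ^ (p i) * (qi d i) ^ 2)⁻¹) ^ n *
        (sFact (p i) (qi d i) n)⁻¹ := by

  classical
  set X : Word I := FreeMonoid.of (i, (1:ℕ+)) with hXdef
  set Q : K := qi d i with hQdef
  set r : K := (-1 : K) ^ (p i) * Q ^ 2 with hrdef
  have hQ0 : Q ≠ 0 := pow_ne_zero _ qq_ne_zero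
  have hdpos : 0 < (d i : ℕ) := (d i).pos
  have hBii : (qq : K) ^ (B i i) = Q ^ 2 := by
    rw [hre, show ((2 : ℤ) * (d i : ℤ)) = ((2 * (d i : ℕ) : ℕ) : ℤ) by push_cast; ring,
      zpow_natCast, hQdef, qi, pow_mul']
  -- r ^ m ≠ 1
  have hrm : ∀ m : ℕ, m ≠ 0 → r ^ m ≠ 1 := by
    intro m hm h
    have hr' : r ^ m = (-1 : K) ^ (p i * m) * qq ^ ((d i : ℕ) * (2 * m)) := by
      rw [hrdef, mul_pow, ← pow_mul, hQdef, qi, ← pow_mul, ← pow_mul]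
    rw [hr'] at h
    rcases Nat.even_or_odd (p i * m) with he | ho
    · rw [he.neg_one_pow, one_mul] at h
      exact qq_pow_ne_one _ (Nat.mul_ne_zero (by omega) (by omega)) h
    · rw [ho.neg_one_pow, neg_one_mul] at h
      exact qq_pow_ne_neg_one ((d i : ℕ) * (2 * m)) (by linear_combination -h)
  have hr1 : r ≠ 1 := by
    have := hrm 1 one_ne_zero; simpa using this
  have h1r : (1 : K) - r ≠ 0 := sub_ne_zero.mpr (Ne.symm hr1)
  -- geometric sum identity
  have hgeom : ∀ m : ℕ, sInt (p i) Q (m + 1) * Q ^ m = ∑ s ∈ Finset.range (m + 1), r ^ s := by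
    intro m
    have hden : (-1 : K) ^ (p i) * Q - Q⁻¹ ≠ 0 := by
      have he : (-1 : K) ^ (p i) * Q - Q⁻¹ = (r - 1) * Q⁻¹ := by
        rw [hrdef]; field_simp
      rw [he]
      exact mul_ne_zero (sub_ne_zero.mpr hr1) (inv_ne_zero hQ0)
    rw [geom_sum_eq hr1, sInt, div_mul_eq_mul_div,
      div_eq_div_iff hden (sub_ne_zero.mpr hr1), hrdef]
    field_simp
    have hQm' : Q ^ (m + 1) * Q⁻¹ ^ (m + 1) = 1 := by
      rw [← mul_pow, mul_inv_cancel₀ hQ0, one_pow]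
    linear_combination (1 - Q ^ 2 * (-1 : K) ^ (p i)) * hQm'
  have hsne : ∀ m : ℕ, sInt (p i) Q (m + 1) ≠ 0 := by
    intro m h0
    have h2 := hgeom m
    rw [h0, zero_mul, geom_sum_eq hr1] at h2
    rcases div_eq_zero_iff.mp h2.symm with h3 | h3
    · exact hrm (m + 1) (Nat.succ_ne_zero m) (by linear_combination h3)
    · exact hr1 (by linear_combination h3)
  have hF0 : ∀ n : ℕ, sFact (p i) Q n ≠ 0 := by
    intro n
    unfold sFact
    exact Finset.prod_ne_zero_iff.mpr fun s _ => hsne s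
  -- the comultiplication of powers
  have hrho' : ∀ n : ℕ, rho ((gen i 1) ^ n) = ∑ t ∈ Finset.range (n + 1),
      Finsupp.single (X ^ t, X ^ (n - t)) (cf r n t) := by
    intro n
    have h := rho_pow p B rho hrho1 hrhomul hrhogen i n
    rw [hBii] at h
    exact h
  -- evaluation helpers
  have hsumR : ∀ (u1 u2 v1 v2 : Word I) (y y' : F I),
      ((Finsupp.single (u1, u2) (1:K) + Finsupp.single (v1, v2) (1:K) : M I)).sum
        (fun ab c => c * Bf (toF ab.1) y * Bf (toF ab.2) y')
      = Bf (toF u1) y * Bf (toF u2) y' + Bf (toF v1) y * Bf (toF v2) y' := by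
    intro u1 u2 v1 v2 y y'
    rw [Finsupp.sum_add_index' (by simp) (by intros; ring),
      Finsupp.sum_single_index (by simp), Finsupp.sum_single_index (by simp),
      one_mul, one_mul]
  have hsumL : ∀ (u1 u2 v1 v2 : Word I) (x x' : F I),
      ((Finsupp.single (u1, u2) (1:K) + Finsupp.single (v1, v2) (1:K) : M I)).sum
        (fun ab c => c * Bf x (toF ab.1) * Bf x' (toF ab.2))
      = Bf x (toF u1) * Bf x' (toF u2) + Bf x (toF v1) * Bf x' (toF v2) := by
    intro u1 u2 v1 v2 x x'
    rw [Finsupp.sum_add_index' (by simp) (by intros; ring),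
      Finsupp.sum_single_index (by simp), Finsupp.sum_single_index (by simp),
      one_mul, one_mul]
  -- basic pairings
  have hBa1 : Bf (gen i 1) 1 = 0 := by
    have h := hR (gen i 1) 1 1
    rw [mul_one, hrhogen, hsumR] at h
    rw [toF_one, h11] at h
    have h' : Bf (gen i 1) 1 = Bf (toF (FreeMonoid.of (i, (1:ℕ+)))) 1 := rfl
    rw [← h', mul_one, one_mul] at h
    linear_combination -h
  have hB1a : Bf 1 (gen i 1) = 0 := by
    have h := hL 1 1 (gen i 1)
    rw [mul_one, hrhogen, hsumL] at h
    rw [toF_one, h11] at h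
    have h' : Bf 1 (gen i 1) = Bf 1 (toF (FreeMonoid.of (i, (1:ℕ+)))) := rfl
    rw [← h', mul_one, one_mul] at h
    linear_combination -h
  have hpow1 : ∀ m : ℕ, Bf ((gen i 1) ^ (m + 1)) 1 = 0 := by
    intro m
    have h := hL (gen i 1) ((gen i 1) ^ m) 1
    rw [hrho1, Finsupp.sum_single_index (by simp), ← pow_succ'] at h
    rw [h, toF_one, hBa1]
    ring
  have hgen_sq : Bf (gen i 1) (gen i 1) = (1 - r)⁻¹ := by
    rw [hgenB i 1 i 1, if_pos ⟨rfl, rfl⟩, hrdef, hQdef, qi]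
    norm_num
    rw [show 2 * (d i : ℕ) = (d i : ℕ) * 2 by ring, pow_mul]
  have hpow_a : ∀ t : ℕ, Bf ((gen i 1) ^ t) (gen i 1) = if t = 1 then (1 - r)⁻¹ else 0 := by
    intro t
    match t with
    | 0 => rw [pow_zero, hB1a, if_neg (by omega)]
    | 1 => rw [pow_one, hgen_sq, if_pos rfl]
    | (k + 2) =>
      rw [if_neg (by omega)]
      have h := hL (gen i 1) ((gen i 1) ^ (k + 1)) (gen i 1)
      rw [hrhogen, hsumL, ← pow_succ'] at h
      rw [h, toF_one, hBa1, hpow1 k]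
      have h' : Bf (gen i 1) (toF (FreeMonoid.of (i, (1:ℕ+)))) = Bf (gen i 1) (gen i 1) := rfl
      ring
  -- the recursion
  have hg : ∀ n : ℕ, Bf ((gen i 1) ^ (n + 1)) ((gen i 1) ^ (n + 1))
      = (∑ s ∈ Finset.range (n + 1), r ^ s) * (1 - r)⁻¹
        * Bf ((gen i 1) ^ n) ((gen i 1) ^ n) := by
    intro n
    have h := hR ((gen i 1) ^ (n + 1)) (gen i 1) ((gen i 1) ^ n)
    rw [← pow_succ', hrho' (n + 1)] at h
    rw [sum_sum_single (Finset.range (n + 2)) (fun t => ((X ^ t : Word I), X ^ (n + 1 - t)))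
      (fun t => cf r (n + 1) t)
      (fun ab c => c * Bf (toF ab.1) (gen i 1) * Bf (toF ab.2) ((gen i 1) ^ n))
      (by intro b; simp) (by intro b x y; ring)] at h
    rw [h, Finset.sum_eq_single_of_mem 1 (Finset.mem_range.mpr (by omega)) ?_]
    · simp only [pow_one]
      rw [show n + 1 - 1 = n from rfl, ← gen_pow, cf_one]
      have hXa : toF X = gen i 1 := rfl
      rw [hXa, hgen_sq]
    · intro t _ hne
      simp only
      rw [show toF ((X ^ t : Word I)) = (gen i 1) ^ t by rw [gen_pow, hXdef], hpow_a,
        if_neg hne]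
      ring
  -- closed form for powers
  have hgg : ∀ n : ℕ, Bf ((gen i 1) ^ n) ((gen i 1) ^ n)
      = Q ^ (n.choose 2) * ((1 - r)⁻¹) ^ n * sFact (p i) Q n := by
    intro n
    induction n with
    | zero => simp [sFact, h11]
    | succ n ih =>
      rw [hg n, ih, ← hgeom n]
      rw [show (n + 1).choose 2 = n.choose 2 + n by
        rw [Nat.choose_succ_succ, Nat.choose_one_right]; ring]
      rw [show sFact (p i) Q (n + 1) = sFact (p i) Q n * sInt (p i) Q (n + 1) from
        Finset.prod_range_succ _ n, pow_add, pow_succ]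
      ring
  -- conclude
  simp only [dp, map_smul, LinearMap.smul_apply, smul_eq_mul]
  rw [hgg n]
  field_simp [hF0 n]
  rw [← hQdef, div_self (pow_ne_zero 2 (hF0 n))]
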